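/- On the sphere of radius 1/√2 in ℝ³, for every n there exists a set of n points determining at least c·n² unit-distance 4-cycles (4-tuples of distinct points with consecutive distances 1, cyclically), for some absolute constant c > 0. Hence C₄^S(n) = Θ(n²). -/

import Mathlib

noncomputable section FourCyclesAux

open Real Finset

private def vv3 (a b c : ℝ) : EuclideanSpace ℝ (Fin 3) := WithLp.toLp 2 ![a, b, c]

private lemma norm_vv3 (a b c : ℝ) : ‖vv3 a b c‖ = Real.sqrt (a^2+b^2+c^2) := by
  rw [EuclideanSpace.norm_eq]
  simp [vv3, Fin.sum_univ_three, sq_abs]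

private lemma dist_vv3 (a b c a' b' c' : ℝ) :
    dist (vv3 a b c) (vv3 a' b' c') = Real.sqrt ((a-a')^2+(b-b')^2+(c-c')^2) := by
  rw [EuclideanSpace.dist_eq]
  simp [vv3, Fin.sum_univ_three, Real.dist_eq, sq_abs]

private lemma rsq : (1 / Real.sqrt 2)^2 = 1/2 := by
  rw [div_pow, one_pow, Real.sq_sqrt (by norm_num : (2:ℝ) ≥ 0)]

private lemma rpos : (0:ℝ) < 1 / Real.sqrt 2 := by positivity

end FourCyclesAux

theorem four_cycles_on_sphere_lower_bound :
    ∃ c : ℝ, 0 < c ∧ ∃ N : ℕ, ∀ n ≥ N,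
      ∃ P : Finset (EuclideanSpace ℝ (Fin 3)),
        (∀ x ∈ P, ‖x‖ = 1 / Real.sqrt 2) ∧ P.card = n ∧
        c * (n : ℝ) ^ 2 ≤
          ({t : EuclideanSpace ℝ (Fin 3) × EuclideanSpace ℝ (Fin 3) ×
              EuclideanSpace ℝ (Fin 3) × EuclideanSpace ℝ (Fin 3) |
            t.1 ∈ P ∧ t.2.1 ∈ P ∧ t.2.2.1 ∈ P ∧ t.2.2.2 ∈ P ∧
            t.1 ≠ t.2.1 ∧ t.1 ≠ t.2.2.1 ∧ t.1 ≠ t.2.2.2 ∧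
            t.2.1 ≠ t.2.2.1 ∧ t.2.1 ≠ t.2.2.2 ∧ t.2.2.1 ≠ t.2.2.2 ∧
            dist t.1 t.2.1 = 1 ∧ dist t.2.1 t.2.2.1 = 1 ∧
            dist t.2.2.1 t.2.2.2 = 1 ∧ dist t.2.2.2 t.1 = 1}.ncard : ℝ) := by
  classical
  refine ⟨1/8, by norm_num, 4, fun n hn => ?_⟩
  set r : ℝ := 1 / Real.sqrt 2 with hr
  have hnpos : (0:ℝ) < n := by exact_mod_cast (by omega : 0 < n)
  -- angles
  set θ : ℕ → ℝ := fun i => Real.pi * (i+1) / n with hθ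
  have hθmem : ∀ i < n - 2, θ i ∈ Set.Icc 0 Real.pi := by
    intro i hi
    constructor
    · apply div_nonneg (by positivity) hnpos.le
    · rw [div_le_iff₀ hnpos]
      have : (i:ℝ) + 1 ≤ n := by
        have : (i:ℝ) + 1 ≤ (n:ℝ) - 2 := by
          have : (i:ℝ) ≤ (n:ℝ) - 3 := by
            have : i + 3 ≤ n := by omega
            have := (Nat.cast_le (α := ℝ)).2 this
            push_cast at this; linarith
          linarith
        linarith
      nlinarith [Real.pi_pos]
  have hθinj : ∀ i < n - 2, ∀ j < n - 2, θ i = θ j → i = j := by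
    intro i hi j hj h
    rw [hθ] at h
    simp only [div_eq_div_iff hnpos.ne' hnpos.ne'] at h
    have h2 := mul_right_cancel₀ hnpos.ne' h
    have h3 := mul_left_cancel₀ Real.pi_ne_zero h2
    have : (i:ℝ) = j := by linarith
    exact_mod_cast this
  -- points
  set a : ℕ → EuclideanSpace ℝ (Fin 3) :=
    fun i => vv3 (r * Real.cos (θ i)) (r * Real.sin (θ i)) 0 with ha
  set p : EuclideanSpace ℝ (Fin 3) := vv3 0 0 r with hp
  set q : EuclideanSpace ℝ (Fin 3) := vv3 0 0 (-r) with hq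
  have hainj : ∀ i < n - 2, ∀ j < n - 2, a i = a j → i = j := by
    intro i hi j hj h
    have hc : r * Real.cos (θ i) = r * Real.cos (θ j) := congrArg (fun v : EuclideanSpace ℝ (Fin 3) => v 0) h
    have hc' : Real.cos (θ i) = Real.cos (θ j) := mul_left_cancel₀ rpos.ne' hc
    exact hθinj i hi j hj (Real.injOn_cos (hθmem i hi) (hθmem j hj) hc')
  -- the sets
  set A : Finset (EuclideanSpace ℝ (Fin 3)) := (Finset.range (n-2)).image a with hA
  have hcardA : A.card = n - 2 := by
    rw [hA, Finset.card_image_of_injOn, Finset.card_range]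
    intro i hi j hj
    simp only [Finset.mem_coe, Finset.mem_range] at hi hj
    exact hainj i hi j hj
  have haP : ∀ x ∈ A, x 2 = 0 := by
    intro x hx
    rw [hA] at hx
    obtain ⟨i, _, rfl⟩ := Finset.mem_image.1 hx
    rfl
  have hpne : p ≠ q := by
    intro h
    have : r = -r := congrArg (fun v : EuclideanSpace ℝ (Fin 3) => v 2) h
    have := rpos; linarith
  have hpA : p ∉ A := fun h => by have := haP p h; have : r = 0 := this; have := rpos; linarith
  have hqA : q ∉ A := fun h => by
    have := haP q h
    have h2 : -r = 0 := this
    have := rpos; linarith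
  set P : Finset (EuclideanSpace ℝ (Fin 3)) := insert p (insert q A) with hP
  have hcardP : P.card = n := by
    rw [hP, Finset.card_insert_of_notMem (by simp [hpne, hpA]),
      Finset.card_insert_of_notMem hqA, hcardA]
    omega
  -- norms
  have hnorm : ∀ x ∈ P, ‖x‖ = r := by
    intro x hx
    rw [hP] at hx
    simp only [Finset.mem_insert] at hx
    rcases hx with rfl | rfl | hx
    · rw [hp, norm_vv3]
      rw [show (0:ℝ)^2+0^2+r^2 = r^2 by ring]
      exact Real.sqrt_sq rpos.le
    · rw [hq, norm_vv3]
      rw [show (0:ℝ)^2+0^2+(-r)^2 = r^2 by ring]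
      exact Real.sqrt_sq rpos.le
    · obtain ⟨i, _, rfl⟩ := Finset.mem_image.1 hx
      rw [ha, norm_vv3]
      rw [show (r * Real.cos (θ i))^2+(r * Real.sin (θ i))^2+(0:ℝ)^2
          = r^2 * ((Real.sin (θ i))^2 + (Real.cos (θ i))^2) by ring,
        Real.sin_sq_add_cos_sq, mul_one]
      exact Real.sqrt_sq rpos.le
  -- key distances
  have hdista : ∀ x ∈ A, dist x p = 1 ∧ dist x q = 1 := by
    intro x hx
    obtain ⟨i, _, rfl⟩ := Finset.mem_image.1 hx
    have key : ∀ s : ℝ, (r * Real.cos (θ i) - 0)^2+(r * Real.sin (θ i) - 0)^2+(0 - s*r)^2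
        = r^2 * ((Real.sin (θ i))^2 + (Real.cos (θ i))^2) + s^2*r^2 := fun s => by ring
    constructor
    · rw [ha, hp, dist_vv3, show (0:ℝ) - r = 0 - 1*r by ring, key 1,
        Real.sin_sq_add_cos_sq, rsq]
      norm_num
    · rw [ha, hq, dist_vv3, show (0:ℝ) - -r = 0 - (-1)*r by ring, key (-1),
        Real.sin_sq_add_cos_sq, rsq]
      norm_num
  -- the cycle set
  set T : Set (EuclideanSpace ℝ (Fin 3) × EuclideanSpace ℝ (Fin 3) ×
      EuclideanSpace ℝ (Fin 3) × EuclideanSpace ℝ (Fin 3)) :=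
    {t | t.1 ∈ P ∧ t.2.1 ∈ P ∧ t.2.2.1 ∈ P ∧ t.2.2.2 ∈ P ∧
      t.1 ≠ t.2.1 ∧ t.1 ≠ t.2.2.1 ∧ t.1 ≠ t.2.2.2 ∧
      t.2.1 ≠ t.2.2.1 ∧ t.2.1 ≠ t.2.2.2 ∧ t.2.2.1 ≠ t.2.2.2 ∧
      dist t.1 t.2.1 = 1 ∧ dist t.2.1 t.2.2.1 = 1 ∧
      dist t.2.2.1 t.2.2.2 = 1 ∧ dist t.2.2.2 t.1 = 1} with hT
  refine ⟨P, hnorm, hcardP, ?_⟩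
  set F : Finset (EuclideanSpace ℝ (Fin 3) × EuclideanSpace ℝ (Fin 3) ×
      EuclideanSpace ℝ (Fin 3) × EuclideanSpace ℝ (Fin 3)) :=
    A.offDiag.image (fun xz => (xz.1, p, xz.2, q)) with hF
  have hFcard : F.card = (n-2) * (n-2) - (n-2) := by
    rw [hF, Finset.card_image_of_injective _ (fun x y h => by
        simpa [Prod.ext_iff] using h),
      Finset.offDiag_card, hcardA]
  have hFsub : (↑F : Set _) ⊆ T := by
    intro t ht
    simp only [hF, Finset.coe_image, Set.mem_image, Finset.mem_coe,
      Finset.mem_offDiag] at ht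
    obtain ⟨⟨x, z⟩, ⟨hx, hz, hxz⟩, rfl⟩ := ht
    have hxP : x ∈ P := by rw [hP]; simp [hx]
    have hzP : z ∈ P := by rw [hP]; simp [hz]
    have hpP : p ∈ P := by rw [hP]; simp
    have hqP : q ∈ P := by rw [hP]; simp
    have hxp : x ≠ p := fun h => hpA (h ▸ hx)
    have hxq : x ≠ q := fun h => hqA (h ▸ hx)
    have hzp : z ≠ p := fun h => hpA (h ▸ hz)
    have hzq : z ≠ q := fun h => hqA (h ▸ hz)
    obtain ⟨hx1, hx2⟩ := hdista x hx
    obtain ⟨hz1, hz2⟩ := hdista z hz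
    exact ⟨hxP, hpP, hzP, hqP, hxp, hxz, hxq, (Ne.symm hzp), hpne, hzq,
      hx1, dist_comm p z ▸ hz1, hz2, dist_comm q x ▸ hx2⟩
  have hTfin : T.Finite := by
    apply Set.Finite.subset (Finset.finite_toSet (P ×ˢ P ×ˢ P ×ˢ P))
    intro t ht
    simp only [Finset.coe_product, Set.mem_prod]
    exact ⟨ht.1, ht.2.1, ht.2.2.1, ht.2.2.2.1⟩
  have hle : (F.card : ℝ) ≤ (T.ncard : ℝ) := by
    exact_mod_cast (by
      rw [← Set.ncard_coe_finset]
      exact Set.ncard_le_ncard hFsub hTfin : F.card ≤ T.ncard)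
  refine le_trans ?_ hle
  rw [hFcard]
  have h4 : 4 ≤ n := hn
  have hm : 2 ≤ n - 2 := by omega
  have hcast : (((n-2)*(n-2) - (n-2) : ℕ) : ℝ) = ((n:ℝ)-2)*((n:ℝ)-2) - ((n:ℝ)-2) := by
    have h1 : n - 2 ≤ (n-2)*(n-2) := Nat.le_mul_of_pos_left _ (by omega)
    rw [Nat.cast_sub h1, Nat.cast_mul, Nat.cast_sub (by omega : 2 ≤ n)]
    push_cast
    ring
  rw [hcast]
  have hn4 : (4:ℝ) ≤ n := by exact_mod_cast h4
  nlinarith [sq_nonneg ((n:ℝ) - 4)]
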